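/- arXiv:1604.02639 — 2 statements merged into one kernel-verified Lean document; each statement's English description precedes it below -/
import Mathlib

section
/- Let f : ℝᵖ → ℝ be convex and h₁,…,hₚ : ℝⁿ → ℝ satisfy the DCP composition rule for f. If I_f denotes the indicator of the domain of f and I_{hⱼ} the indicators of the domains of hⱼ, then the indicator of the domain of x ↦ f(h₁(x),…,hₚ(x)) equals I_f(h₁(x),…,hₚ(x)) + ∑ⱼ I_{hⱼ}(x), and this function is convex. -/
open scoped Classical

theorem composition_domain_indicator {n p : ℕ}
    (f : (Fin p → ℝ) → ℝ) (Df : Set (Fin p → ℝ)) (hDf : Convex ℝ Df)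
    (hf : ConvexOn ℝ Df f)
    (h : Fin p → EuclideanSpace ℝ (Fin n) → ℝ)
    (Dh : Fin p → Set (EuclideanSpace ℝ (Fin n)))
    (hDh : ∀ j, Convex ℝ (Dh j))
    (hcomp : ∀ j : Fin p,
      (ConvexOn ℝ (Dh j) (h j) ∧
        ∀ (u v : Fin p → ℝ), (∀ k, k ≠ j → u k = v k) → u j ≤ v j →
          (if u ∈ Df then ((f u : ℝ) : EReal) else ⊤)
            ≤ (if v ∈ Df then ((f v : ℝ) : EReal) else ⊤)) ∨
      (ConcaveOn ℝ (Dh j) (h j) ∧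
        ∀ (u v : Fin p → ℝ), (∀ k, k ≠ j → u k = v k) → u j ≤ v j →
          (if v ∈ Df then ((f v : ℝ) : EReal) else ⊤)
            ≤ (if u ∈ Df then ((f u : ℝ) : EReal) else ⊤)) ∨
      (∃ (w : EuclideanSpace ℝ (Fin n) →ₗ[ℝ] ℝ) (c : ℝ),
        h j = fun x => w x + c)) :
    -- the indicator of the domain of the composition splits as a sum
    ((fun x : EuclideanSpace ℝ (Fin n) =>
        (if ((∀ j, x ∈ Dh j) ∧ (fun j => h j x) ∈ Df) then (0 : EReal) else ⊤))
      = fun x =>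
        (if (fun j => h j x) ∈ Df then (0 : EReal) else ⊤)
          + ∑ j : Fin p, (if x ∈ Dh j then (0 : EReal) else ⊤)) ∧
    -- and this indicator is a convex (extended-real-valued) function
    (∀ x y : EuclideanSpace ℝ (Fin n), ∀ a b : ℝ,
      0 ≤ a → 0 ≤ b → a + b = 1 →
      (if ((∀ j, a • x + b • y ∈ Dh j) ∧ (fun j => h j (a • x + b • y)) ∈ Df)
          then (0 : EReal) else ⊤)
        ≤ (a : EReal) * (if ((∀ j, x ∈ Dh j) ∧ (fun j => h j x) ∈ Df)
            then (0 : EReal) else ⊤)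
          + (b : EReal) * (if ((∀ j, y ∈ Dh j) ∧ (fun j => h j y) ∈ Df)
            then (0 : EReal) else ⊤)) := by
  -- Key membership lemma: the domain of the composition is convex
  have hmem : ∀ x y : EuclideanSpace ℝ (Fin n), ∀ a b : ℝ,
      0 ≤ a → 0 ≤ b → a + b = 1 →
      ((∀ j, x ∈ Dh j) ∧ (fun j => h j x) ∈ Df) →
      ((∀ j, y ∈ Dh j) ∧ (fun j => h j y) ∈ Df) →
      ((∀ j, a • x + b • y ∈ Dh j) ∧ (fun j => h j (a • x + b • y)) ∈ Df) := by
    intro x y a b ha hb hab hx hy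
    set z := a • x + b • y with hz
    refine ⟨fun j => hDh j (hx.1 j) (hy.1 j) ha hb hab, ?_⟩
    have key : ∀ S : Finset (Fin p),
        (fun k => if k ∈ S then h k z else a * h k x + b * h k y) ∈ Df := by
      intro S
      induction S using Finset.induction_on with
      | empty =>
        have : (fun k => if k ∈ (∅ : Finset (Fin p)) then h k z
            else a * h k x + b * h k y)
            = a • (fun j => h j x) + b • (fun j => h j y) := by
          funext k; simp [smul_eq_mul]
        rw [this]
        exact hDf hx.2 hy.2 ha hb hab
      | @insert j S hjS IH =>
        set m : Fin p → ℝ :=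
          fun k => if k ∈ S then h k z else a * h k x + b * h k y with hm
        set g : Fin p → ℝ :=
          fun k => if k ∈ insert j S then h k z else a * h k x + b * h k y
            with hg
        have hgm : ∀ k, k ≠ j → g k = m k := by
          intro k hk; simp [hg, hm, Finset.mem_insert, hk]
        have hgj : g j = h j z := by simp [hg]
        have hmj : m j = a * h j x + b * h j y := by simp [hm, hjS]
        show g ∈ Df
        rcases hcomp j with ⟨hcvx, hmono⟩ | ⟨hccv, hmono⟩ | ⟨w, c, hw⟩
        · have hle : g j ≤ m j := by
            rw [hgj, hmj]
            simpa [smul_eq_mul] using hcvx.2 (hx.1 j) (hy.1 j) ha hb hab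
          have := hmono g m hgm hle
          rw [if_pos IH] at this
          by_contra hgDf
          rw [if_neg hgDf] at this
          exact absurd this (by simp)
        · have hle : m j ≤ g j := by
            rw [hgj, hmj]
            simpa [smul_eq_mul] using hccv.2 (hx.1 j) (hy.1 j) ha hb hab
          have := hmono m g (fun k hk => (hgm k hk).symm) hle
          rw [if_pos IH] at this
          by_contra hgDf
          rw [if_neg hgDf] at this
          exact absurd this (by simp)
        · have hgm' : g = m := by
            funext k
            by_cases hk : k = j
            · subst hk
              rw [hgj, hmj, hw]
              simp only [hz, map_add, map_smul, smul_eq_mul]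
              linear_combination (-c) * hab
            · exact hgm k hk
          rw [hgm']; exact IH
    have := key Finset.univ
    simpa using this
  constructor
  · -- the splitting of the indicator
    funext x
    by_cases hall : ∀ j, x ∈ Dh j
    · have hsum : (∑ j : Fin p, (if x ∈ Dh j then (0 : EReal) else ⊤)) = 0 := by
        simp [hall]
      rw [hsum, add_zero]
      by_cases hfx : (fun j => h j x) ∈ Df <;> simp [hall, hfx]
    · push_neg at hall
      obtain ⟨j, hj⟩ := hall
      have hsum : (∑ j : Fin p, (if x ∈ Dh j then (0 : EReal) else ⊤)) = ⊤ := by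
        refine top_le_iff.mp ?_
        have := Finset.single_le_sum
          (f := fun j : Fin p => (if x ∈ Dh j then (0 : EReal) else ⊤))
          (fun i _ => by by_cases hi : x ∈ Dh i <;> simp [hi]) (Finset.mem_univ j)
        simpa [hj] using this
      rw [hsum]
      have hleft : (if ((∀ j, x ∈ Dh j) ∧ (fun j => h j x) ∈ Df)
          then (0 : EReal) else ⊤) = ⊤ := by
        rw [if_neg]; rintro ⟨hall', -⟩; exact hj (hall' j)
      rw [hleft]
      by_cases hfx : (fun j => h j x) ∈ Df <;> simp [hfx]
  · -- convexity of the indicator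
    intro x y a b ha hb hab
    by_cases hx : (∀ j, x ∈ Dh j) ∧ (fun j => h j x) ∈ Df
    · by_cases hy : (∀ j, y ∈ Dh j) ∧ (fun j => h j y) ∈ Df
      · have := hmem x y a b ha hb hab hx hy
        simp [hx, hy, this]
      · rcases eq_or_lt_of_le hb with hb0 | hb0
        · have ha1 : a = 1 := by linarith
          subst ha1
          have : (1 : ℝ) • x + b • y = x := by
            rw [← hb0]; simp
          rw [this]
          simp [hx, hy, ← hb0]
        · have hbtop : (b : EReal) * (⊤ : EReal) = ⊤ :=
            EReal.mul_top_of_pos (by exact_mod_cast hb0)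
          rw [if_pos hx, if_neg hy, mul_zero, hbtop, zero_add]
          exact le_top
    · rcases eq_or_lt_of_le ha with ha0 | ha0
      · have hb1 : b = 1 := by linarith
        subst hb1
        have : a • x + (1 : ℝ) • y = y := by
          rw [← ha0]; simp
        rw [this]
        by_cases hy : (∀ j, y ∈ Dh j) ∧ (fun j => h j y) ∈ Df <;>
          simp [hx, hy, ← ha0]
      · have hatop : (a : EReal) * (⊤ : EReal) = ⊤ :=
          EReal.mul_top_of_pos (by exact_mod_cast ha0)
        rw [if_neg hx, hatop]
        have hne : (b : EReal) * (if ((∀ j, y ∈ Dh j) ∧ (fun j => h j y) ∈ Df)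
            then (0 : EReal) else ⊤) ≠ ⊥ := by
          by_cases hy : (∀ j, y ∈ Dh j) ∧ (fun j => h j y) ∈ Df
          · simp [hy]
          · rw [if_neg hy]
            rcases eq_or_lt_of_le hb with hb0 | hb0
            · rw [← hb0]; simp
            · rw [EReal.coe_mul_top_of_pos hb0]; simp
        rw [EReal.top_add_of_ne_bot hne]
        exact le_top
end

section
/- If x* is optimal for the convexified problem minimize f₀(x) − ĝ₀(x; x₀) subject to fᵢ(x) − ĝᵢ(x; x₀) ≤ 0, and x* is feasible, then the true objective satisfies f₀(x*) − g₀(x*) ≤ f₀(x₀) − g₀(x₀) whenever x₀ is feasible for the convexified problem; i.e., basic CCP produces nonincreasing objective values. -/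
open Filter Topology

lemma convex_grad_ineq {E : Type*} [NormedAddCommGroup E] [InnerProductSpace ℝ E] [CompleteSpace E]
    {g : E → ℝ} {v x y : E} (hg : ConvexOn ℝ Set.univ g) (h : HasGradientAt g v x) :
    g x + inner ℝ v (y - x) ≤ g y := by
  set d := y - x with hd
  have hF : HasFDerivAt g (InnerProductSpace.toDual ℝ E v) x :=
    hasGradientAt_iff_hasFDerivAt.mp h
  have hc : HasDerivAt (fun t : ℝ => x + t • d) d 0 := by
    simpa using ((hasDerivAt_id (0:ℝ)).smul_const d).const_add x
  have hφ : HasDerivAt (fun t : ℝ => g (x + t • d)) (inner ℝ v d) 0 := by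
    have hF' : HasFDerivAt g (InnerProductSpace.toDual ℝ E v) (x + (0:ℝ) • d) := by
      simpa using hF
    have h' := hF'.comp_hasDerivAt 0 hc
    simp at h'
    exact h'
  have htend : Tendsto (slope (fun t : ℝ => g (x + t • d)) 0) (𝓝[>] 0)
      (𝓝 (inner ℝ v d : ℝ)) :=
    (hasDerivAt_iff_tendsto_slope.mp hφ).mono_left
      (nhdsWithin_mono 0 (fun t ht => ne_of_gt ht))
  have hslope : ∀ᶠ t in 𝓝[>] (0:ℝ),
      slope (fun t : ℝ => g (x + t • d)) 0 t ≤ g y - g x := by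
    filter_upwards [Ioo_mem_nhdsGT_of_mem (by norm_num : (0:ℝ) ∈ Set.Ico 0 1)]
      with t ht
    have ht0 : 0 < t := ht.1
    have key : g (x + t • d) ≤ (1 - t) * g x + t * g y := by
      have := hg.2 (Set.mem_univ x) (Set.mem_univ y) (by linarith [ht.2] : (0:ℝ) ≤ 1 - t)
        ht0.le (by ring)
      have hxy : (1 - t) • x + t • y = x + t • d := by
        rw [hd]; module
      simpa [hxy] using this
    have : (g (x + t • d) - g (x + (0:ℝ) • d)) / (t - 0) ≤ g y - g x := by
      simp only [zero_smul, add_zero, sub_zero]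
      rw [div_le_iff₀ ht0]
      nlinarith [key]
    simpa [slope_def_field, div_eq_inv_mul] using this
  have : (inner ℝ v d : ℝ) ≤ g y - g x :=
    le_of_tendsto htend hslope
  linarith

theorem ccp_descent {n m : ℕ}
    (f0 g0 : EuclideanSpace ℝ (Fin n) → ℝ)
    (f g : Fin m → EuclideanSpace ℝ (Fin n) → ℝ)
    (v0 : EuclideanSpace ℝ (Fin n)) (v : Fin m → EuclideanSpace ℝ (Fin n))
    (x0 xstar : EuclideanSpace ℝ (Fin n))
    (hf0 : ConvexOn ℝ Set.univ f0) (hg0 : ConvexOn ℝ Set.univ g0)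
    (hf : ∀ i, ConvexOn ℝ Set.univ (f i)) (hg : ∀ i, ConvexOn ℝ Set.univ (g i))
    (hgrad0 : HasGradientAt g0 v0 x0)
    (hgrad : ∀ i, HasGradientAt (g i) (v i) x0)
    (hxstar_feas : ∀ i, f i xstar - (g i x0 + inner ℝ (v i) (xstar - x0)) ≤ 0)
    (hxstar_opt : ∀ y : EuclideanSpace ℝ (Fin n),
      (∀ i, f i y - (g i x0 + inner ℝ (v i) (y - x0)) ≤ 0) →
      f0 xstar - (g0 x0 + inner ℝ v0 (xstar - x0))
        ≤ f0 y - (g0 x0 + inner ℝ v0 (y - x0)))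
    (hx0_feas : ∀ i, f i x0 - (g i x0 + inner ℝ (v i) (x0 - x0)) ≤ 0) :
    f0 xstar - g0 xstar ≤ f0 x0 - g0 x0 := by
  have h1 := hxstar_opt x0 hx0_feas
  have h2 : g0 x0 + inner ℝ v0 (xstar - x0) ≤ g0 xstar :=
    convex_grad_ineq hg0 hgrad0
  have h3 : (inner ℝ v0 (x0 - x0) : ℝ) = 0 := by simp
  linarith
end
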